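/- Let a, b > 1 with log(a)/log(b) = p/q rational, h_n = a^{−n}, k_n = b^{−n}. If f(0) = 0, f(h_n)/h_n → R and f(−k_n)/(−k_n) → L with R, L real, then R and L are the only possible accumulation points of the set of sequential cord derivatives of f at 0; in particular, the set of limits of (f(h_{i_n}) − f(−k_{j_n}))/(h_{i_n} + k_{j_n}) over all subsequences is contained in {rR + (1−r)L : r ∈ F} where F = {1/(1 + b^{t/q}) : t ∈ ℤ} ∪ {0, 1}. -/

import Mathlib

open Filter Topology

private lemma cord_split (X Y h k : ℝ) (hh : h ≠ 0) (hk : k ≠ 0) (hhk : h + k ≠ 0) :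
    (X - Y) / (h + k) = (h/(h+k)) * (X/h) + (1 - h/(h+k)) * (Y/(-k)) := by
  field_simp
  ring

private lemma ratio_split (A B : ℝ) (hA : (0:ℝ) < A) (hB : (0:ℝ) < B) :
    1 / (1 + A / B) = (1/A) / (1/A + 1/B) := by
  have h1 : A ≠ 0 := ne_of_gt hA
  have h2 : B ≠ 0 := ne_of_gt hB
  have h3 : A + B ≠ 0 := by positivity
  have h4 : B + A ≠ 0 := by positivity
  field_simp

theorem exp_decay_rational_cord_derivs_discrete (a b : ℝ) (ha : 1 < a) (hb : 1 < b)
    (p q : ℤ) (hq : q ≠ 0) (hrat : Real.log a / Real.log b = (p : ℝ) / (q : ℝ))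
    (f : ℝ → ℝ) (R L : ℝ) (hf0 : f 0 = 0)
    (hR : Tendsto (fun n : ℕ => f (1 / a ^ n) / (1 / a ^ n)) atTop (𝓝 R))
    (hL : Tendsto (fun n : ℕ => f (-(1 / b ^ n)) / (-(1 / b ^ n))) atTop (𝓝 L))
    (M : ℝ) (i j : ℕ → ℕ) (hi : StrictMono i) (hj : StrictMono j)
    (hM : Tendsto (fun n => (f (1 / a ^ i n) - f (-(1 / b ^ j n))) / (1 / a ^ i n + 1 / b ^ j n))
      atTop (𝓝 M)) :
    ∃ r : ℝ, ((∃ t : ℤ, r = 1 / (1 + b ^ ((t : ℝ) / (q : ℝ)))) ∨ r = 0 ∨ r = 1) ∧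
      M = r * R + (1 - r) * L := by
  have hb0 : (0:ℝ) < b := lt_trans one_pos hb
  have ha0 : (0:ℝ) < a := lt_trans one_pos ha
  have hlogb : (0:ℝ) < Real.log b := Real.log_pos hb
  have hlogb' : Real.log b ≠ 0 := ne_of_gt hlogb
  have hqR : (q:ℝ) ≠ 0 := Int.cast_ne_zero.mpr hq
  have hab : a = b ^ ((p:ℝ)/(q:ℝ)) := by
    have hloga : Real.log a = Real.log b * ((p:ℝ)/(q:ℝ)) := by
      rw [← hrat, mul_comm, div_mul_cancel₀ _ hlogb']
    rw [Real.rpow_def_of_pos hb0, ← hloga, Real.exp_log ha0]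
  set t : ℕ → ℤ := fun n => (i n : ℤ) * p - (j n : ℤ) * q with ht
  set e : ℕ → ℝ := fun n => ((t n : ℝ))/(q:ℝ) with he
  have hbe : ∀ n, b ^ (e n) = a ^ (i n) / b ^ (j n) := by
    intro n
    have h1 : e n = (i n : ℝ) * ((p:ℝ)/(q:ℝ)) - (j n : ℝ) := by
      simp only [he, ht]; push_cast; field_simp
    rw [h1, Real.rpow_sub hb0, Real.rpow_natCast]
    congr 1
    rw [hab, ← Real.rpow_natCast (b ^ ((p:ℝ)/(q:ℝ))) (i n), ← Real.rpow_mul hb0.le,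
      mul_comm]
  set r : ℕ → ℝ := fun n => 1 / (1 + b ^ (e n)) with hrdef
  have hbepos : ∀ n, 0 < b ^ (e n) := fun n => Real.rpow_pos_of_pos hb0 _
  have hrn : ∀ n, r n = (1/a^(i n)) / (1/a^(i n) + 1/b^(j n)) := by
    intro n
    have hA0 : (0:ℝ) < a ^ i n := by positivity
    have hB0 : (0:ℝ) < b ^ j n := by positivity
    show 1 / (1 + b ^ (e n)) = (1/a^(i n)) / (1/a^(i n) + 1/b^(j n))
    rw [hbe n]
    exact ratio_split _ _ hA0 hB0
  have hM' : Tendsto (fun n => r n * (f (1/a^(i n)) / (1/a^(i n)))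
      + (1 - r n) * (f (-(1/b^(j n))) / (-(1/b^(j n))))) atTop (𝓝 M) := by
    refine hM.congr fun n => ?_
    rw [hrn n]
    have h1 : (1:ℝ)/a^(i n) ≠ 0 := by positivity
    have h2 : (1:ℝ)/b^(j n) ≠ 0 := by positivity
    have h3 : (1:ℝ)/a^(i n) + 1/b^(j n) ≠ 0 := by positivity
    exact cord_split _ _ _ _ h1 h2 h3
  have hAt : Tendsto (fun n => f (1/a^(i n)) / (1/a^(i n))) atTop (𝓝 R) :=
    hR.comp hi.tendsto_atTop
  have hBt : Tendsto (fun n => f (-(1/b^(j n))) / (-(1/b^(j n)))) atTop (𝓝 L) :=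
    hL.comp hj.tendsto_atTop
  have hcomb : ∀ (φ : ℕ → ℕ), StrictMono φ → ∀ r₀ : ℝ,
      Tendsto (fun n => r (φ n)) atTop (𝓝 r₀) → M = r₀ * R + (1 - r₀) * L := by
    intro φ hφ r₀ hr₀
    have h1 : Tendsto (fun n => r (φ n) * (f (1/a^(i (φ n))) / (1/a^(i (φ n))))
        + (1 - r (φ n)) * (f (-(1/b^(j (φ n)))) / (-(1/b^(j (φ n)))))) atTop (𝓝 M) :=
      hM'.comp hφ.tendsto_atTop
    have h2 : Tendsto (fun n => r (φ n) * (f (1/a^(i (φ n))) / (1/a^(i (φ n))))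
        + (1 - r (φ n)) * (f (-(1/b^(j (φ n)))) / (-(1/b^(j (φ n)))))) atTop
        (𝓝 (r₀ * R + (1 - r₀) * L)) :=
      (hr₀.mul (hAt.comp hφ.tendsto_atTop)).add
        ((tendsto_const_nhds.sub hr₀).mul (hBt.comp hφ.tendsto_atTop))
    exact tendsto_nhds_unique h1 h2
  by_cases hA : ∃ t₀ : ℤ, ∃ᶠ n in atTop, t n = t₀
  · obtain ⟨t₀, hfr⟩ := hA
    obtain ⟨φ, hφ, hφt⟩ := Filter.extraction_of_frequently_atTop hfr
    refine ⟨1/(1 + b ^ ((t₀:ℝ)/(q:ℝ))), Or.inl ⟨t₀, rfl⟩, hcomb φ hφ _ ?_⟩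
    have hconst : ∀ n, r (φ n) = 1/(1 + b ^ ((t₀:ℝ)/(q:ℝ))) := by
      intro n; simp only [hrdef, he, hφt n]
    rw [funext hconst]
    exact tendsto_const_nhds
  · push_neg at hA
    have hA' : ∀ t₀ : ℤ, ∀ᶠ n in atTop, t n ≠ t₀ := fun t₀ =>
      hA t₀
    have habs : Tendsto (fun n => |t n|) atTop atTop := by
      rw [tendsto_atTop]
      intro C
      have h1 : ∀ᶠ n in atTop, ∀ m ∈ Finset.Icc (-C) C, t n ≠ m :=
        (Filter.eventually_all_finset _).2 fun m _ => hA' m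
      filter_upwards [h1] with n hn
      by_contra hc
      push_neg at hc
      exact hn (t n) (Finset.mem_Icc.mpr ⟨(abs_lt.mp hc).1.le, (abs_lt.mp hc).2.le⟩) rfl
    have heabs : Tendsto (fun n => |e n|) atTop atTop := by
      have h1 : Tendsto (fun n => ((|t n| : ℤ) : ℝ)) atTop atTop :=
        tendsto_intCast_atTop_atTop.comp habs
      have h2 : Tendsto (fun n => ((|t n| : ℤ) : ℝ) / |(q:ℝ)|) atTop atTop :=
        h1.atTop_div_const (abs_pos.mpr hqR)
      refine h2.congr fun n => ?_
      simp [he, abs_div, Int.cast_abs]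
    by_cases hB : ∃ᶠ n in atTop, 0 ≤ e n
    · obtain ⟨φ, hφ, hφe⟩ := Filter.extraction_of_frequently_atTop hB
      refine ⟨0, Or.inr (Or.inl rfl), hcomb φ hφ 0 ?_⟩
      have h1 : Tendsto (fun n => e (φ n)) atTop atTop :=
        (heabs.comp hφ.tendsto_atTop).congr fun n => abs_of_nonneg (hφe n)
      have h3 : Tendsto (fun n => Real.log b * e (φ n)) atTop atTop :=
        h1.const_mul_atTop hlogb
      have h4 := Real.tendsto_exp_atTop.comp h3
      have h2 : Tendsto (fun n => b ^ (e (φ n))) atTop atTop :=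
        h4.congr fun n => (Real.rpow_def_of_pos hb0 _).symm
      have h5 : Tendsto (fun n => 1 + b ^ (e (φ n))) atTop atTop :=
        tendsto_atTop_add_const_left _ 1 h2
      have h6 := tendsto_inv_atTop_zero.comp h5
      refine h6.congr fun n => ?_
      simp [hrdef, Function.comp, one_div]
    · have hev : ∀ᶠ n in atTop, e n < 0 := by
        have h0 := Filter.not_frequently.mp hB
        filter_upwards [h0] with n hn
        exact lt_of_not_ge hn
      refine ⟨1, Or.inr (Or.inr rfl), hcomb id strictMono_id 1 ?_⟩
      have h3 : Tendsto e atTop atBot := by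
        rw [tendsto_atBot]
        intro C
        filter_upwards [hev, heabs.eventually_ge_atTop (-C)] with n h1 h2
        rw [abs_of_neg h1] at h2
        linarith
      have h5 : Tendsto (fun n => Real.log b * e n) atTop atBot :=
        h3.const_mul_atBot hlogb
      have h6 := Real.tendsto_exp_atBot.comp h5
      have h4 : Tendsto (fun n => b ^ (e n)) atTop (𝓝 0) :=
        h6.congr fun n => (Real.rpow_def_of_pos hb0 _).symm
      have h7 : Tendsto (fun n => 1 / (1 + b ^ (e n))) atTop (𝓝 (1/(1+0))) :=
        tendsto_const_nhds.div (tendsto_const_nhds.add h4) (by norm_num)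
      simp only [add_zero, div_one] at h7
      exact h7
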